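/- Let K ≥ 1, p_k ≥ 1 for each k ≤ K, σ^k : Fin p_k → ℝ positive with pairwise distinct values in each mode, and S : Π_k Fin p_k → ℝ. Define C_i = 1 + Σ_{k=1}^K Σ_{j ≠ i_k} S_{i(k→j)}² / ((σ^k_{i_k})² − (σ^k_j)²) − S_i² Σ_{k=1}^K ( 1/(σ^k_{i_k})² + Σ_{m ≠ i_k} 1/((σ^k_m)² − (σ^k_{i_k})²) ), where i(k→j) replaces the k-th coordinate of i by j. Then Σ_i C_i = Π_k p_k − Σ_i S_i² Σ_{k=1}^K 1/(σ^k_{i_k})². -/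
import Mathlib


open Finset

lemma swap_sum {K : ℕ} {p : Fin K → ℕ} (k : Fin K)
    (g : ((k : Fin K) → Fin (p k)) → Fin (p k) → ℝ) :
    ∑ i : (k : Fin K) → Fin (p k), ∑ j ∈ univ.erase (i k),
        g (Function.update i k j) (i k)
      = ∑ i : (k : Fin K) → Fin (p k), ∑ m ∈ univ.erase (i k), g i m := by
  rw [Finset.sum_sigma', Finset.sum_sigma']
  apply Finset.sum_nbij' (fun x => (⟨Function.update x.1 k x.2, x.1 k⟩ :
      Σ i : (k : Fin K) → Fin (p k), Fin (p k)))
    (fun x => ⟨Function.update x.1 k x.2, x.1 k⟩)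
  · rintro ⟨i, j⟩ h
    simp only [Finset.mem_sigma, Finset.mem_univ, Finset.mem_erase] at h ⊢
    simpa [Function.update_self] using fun hc => h.2.1 hc.symm
  · rintro ⟨i, j⟩ h
    simp only [Finset.mem_sigma, Finset.mem_univ, Finset.mem_erase] at h ⊢
    simpa [Function.update_self] using fun hc => h.2.1 hc.symm
  · rintro ⟨i, j⟩ h
    simp [Function.update_self, Function.update_idem, Function.update_eq_self]
  · rintro ⟨i, j⟩ h
    simp [Function.update_self, Function.update_idem, Function.update_eq_self]
  · rintro ⟨i, j⟩ h
    simp [Function.update_self]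

theorem sum_correction_array (K : ℕ) (hK : 1 ≤ K) (p : Fin K → ℕ)
    (hp : ∀ k, 1 ≤ p k) (σ : (k : Fin K) → Fin (p k) → ℝ)
    (hσpos : ∀ k i, 0 < σ k i)
    (hdist : ∀ k, Function.Injective (σ k))
    (S : ((k : Fin K) → Fin (p k)) → ℝ)
    (C : ((k : Fin K) → Fin (p k)) → ℝ)
    (hC : ∀ i, C i =
      1 + ∑ k, ∑ j ∈ univ.erase (i k),
            S (Function.update i k j) ^ 2 / ((σ k (i k)) ^ 2 - (σ k j) ^ 2)
        - S i ^ 2 * ∑ k, (1 / (σ k (i k)) ^ 2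
            + ∑ m ∈ univ.erase (i k), 1 / ((σ k m) ^ 2 - (σ k (i k)) ^ 2))) :
    ∑ i : (k : Fin K) → Fin (p k), C i
      = (∏ k, (p k : ℝ))
        - ∑ i : (k : Fin K) → Fin (p k), S i ^ 2 * ∑ k, 1 / (σ k (i k)) ^ 2 := by
  have hcard : ∑ i : (k : Fin K) → Fin (p k), (1 : ℝ) = ∏ k, (p k : ℝ) := by
    simp [Finset.card_univ, Fintype.card_pi]
  calc ∑ i, C i
      = ∑ i : (k : Fin K) → Fin (p k), (1 : ℝ)
        + ∑ i : (k : Fin K) → Fin (p k), ∑ k, ∑ j ∈ univ.erase (i k),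
            S (Function.update i k j) ^ 2 / ((σ k (i k)) ^ 2 - (σ k j) ^ 2)
        - (∑ i : (k : Fin K) → Fin (p k), S i ^ 2 * ∑ k, 1 / (σ k (i k)) ^ 2
          + ∑ i : (k : Fin K) → Fin (p k), ∑ k, ∑ m ∈ univ.erase (i k),
              S i ^ 2 / ((σ k m) ^ 2 - (σ k (i k)) ^ 2)) := by
        rw [Finset.sum_congr rfl (fun i _ => hC i)]
        rw [Finset.sum_sub_distrib, Finset.sum_add_distrib]
        congr 1
        rw [← Finset.sum_add_distrib]
        apply Finset.sum_congr rfl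
        intro i _
        rw [Finset.sum_add_distrib, mul_add]
        congr 1
        rw [Finset.mul_sum]
        refine Finset.sum_congr rfl fun k _ => ?_
        rw [Finset.mul_sum]
        exact Finset.sum_congr rfl fun m _ => by ring
    _ = (∏ k, (p k : ℝ))
        - ∑ i : (k : Fin K) → Fin (p k), S i ^ 2 * ∑ k, 1 / (σ k (i k)) ^ 2 := by
        rw [hcard]
        have key : ∑ i : (k : Fin K) → Fin (p k), ∑ k, ∑ j ∈ univ.erase (i k),
              S (Function.update i k j) ^ 2 / ((σ k (i k)) ^ 2 - (σ k j) ^ 2)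
            = ∑ i : (k : Fin K) → Fin (p k), ∑ k, ∑ m ∈ univ.erase (i k),
              S i ^ 2 / ((σ k m) ^ 2 - (σ k (i k)) ^ 2) := by
          calc ∑ i : (k : Fin K) → Fin (p k), ∑ k, ∑ j ∈ univ.erase (i k),
                  S (Function.update i k j) ^ 2 / ((σ k (i k)) ^ 2 - (σ k j) ^ 2)
              = ∑ k, ∑ i : (k : Fin K) → Fin (p k), ∑ j ∈ univ.erase (i k),
                  S (Function.update i k j) ^ 2 / ((σ k (i k)) ^ 2 - (σ k j) ^ 2) :=
                Finset.sum_comm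
            _ = ∑ k, ∑ i : (k : Fin K) → Fin (p k), ∑ m ∈ univ.erase (i k),
                  S i ^ 2 / ((σ k m) ^ 2 - (σ k (i k)) ^ 2) := by
                refine Finset.sum_congr rfl fun k _ => ?_
                have := swap_sum (p := p) k
                  (fun i m => S i ^ 2 / ((σ k m) ^ 2 - (σ k (i k)) ^ 2))
                simpa [Function.update_self] using this
            _ = ∑ i : (k : Fin K) → Fin (p k), ∑ k, ∑ m ∈ univ.erase (i k),
                  S i ^ 2 / ((σ k m) ^ 2 - (σ k (i k)) ^ 2) := Finset.sum_comm
        rw [key]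
        ring
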